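/- Let E be a complex inner product space, and let x, y, θ ∈ E be unit vectors with [x] ≠ [θ] and [y] ≠ [θ] as projective points. Then min(|[θ],[x]|, |[θ],[y]|) ≤ dist([θ⊕θ], x#y) ≤ max(|[θ],[x]|, |[θ],[y]|), where dist([θ⊕θ], x#y) denotes the infimum over (λ,μ) ∈ ℂ²∖{0} of the Fubini–Study distance |[(λx, μy)], [(θ,θ)]| computed in E × E. -/

import Mathlib

open scoped InnerProductSpace

/-- The Fubini–Study (chordal) distance between the projective points `[u]`, `[v]`
determined by nonzero vectors `u`, `v` of a complex inner product space:
`|[u],[v]|² = 1 − |⟨u,v⟩|²/(‖u‖²·‖v‖²)`. -/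
noncomputable def fsDist {E : Type*} [NormedAddCommGroup E] [InnerProductSpace ℂ E]
    (u v : E) : ℝ :=
  Real.sqrt (1 - ‖(⟪u, v⟫_ℂ)‖ ^ 2 / (‖u‖ ^ 2 * ‖v‖ ^ 2))

/-- The distance from the projective point `[(θ,θ)]` of `E × E` (with the direct-sum
inner product, i.e. the `L²` product `WithLp 2 (E × E)`) to the join `x#y`, namely the
infimum over `(λ,μ) ∈ ℂ² ∖ {0}` of the Fubini–Study distances `|[(λx, μy)], [(θ,θ)]|`. -/
noncomputable def joinDist {E : Type*} [NormedAddCommGroup E] [InnerProductSpace ℂ E]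
    (x y θ : E) : ℝ :=
  ⨅ p : {p : ℂ × ℂ // p ≠ 0},
    fsDist ((WithLp.equiv 2 (E × E)).symm ((p : ℂ × ℂ).1 • x, (p : ℂ × ℂ).2 • y))
      ((WithLp.equiv 2 (E × E)).symm (θ, θ))

/-- Lemma 6.2 (joindist): for unit vectors `x, y, θ` with `[x] ≠ [θ]` and `[y] ≠ [θ]`
as projective points,
`min |[θ],[x]| |[θ],[y]| ≤ dist([θ⊕θ], x#y) ≤ max |[θ],[x]| |[θ],[y]|`. -/
theorem join_dist_bounds {E : Type*} [NormedAddCommGroup E] [InnerProductSpace ℂ E]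
    (x y θ : E) (hx : ‖x‖ = 1) (hy : ‖y‖ = 1) (hθ : ‖θ‖ = 1)
    (hxθ : ∀ c : ℂ, x ≠ c • θ) (hyθ : ∀ c : ℂ, y ≠ c • θ) :
    min (fsDist θ x) (fsDist θ y) ≤ joinDist x y θ ∧
      joinDist x y θ ≤ max (fsDist θ x) (fsDist θ y) := by
  set A : ℂ := ⟪x, θ⟫_ℂ with hA
  set B : ℂ := ⟪y, θ⟫_ℂ with hB
  set a : ℝ := ‖A‖ with ha
  set b : ℝ := ‖B‖ with hb
  have hfx : fsDist θ x = Real.sqrt (1 - a ^ 2) := by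
    rw [fsDist, hθ, hx, ha, hA, norm_inner_symm]
    norm_num
  have hfy : fsDist θ y = Real.sqrt (1 - b ^ 2) := by
    rw [fsDist, hθ, hy, hb, hB, norm_inner_symm]
    norm_num
  have key : ∀ l m : ℂ,
      fsDist ((WithLp.equiv 2 (E × E)).symm (l • x, m • y))
        ((WithLp.equiv 2 (E × E)).symm (θ, θ)) =
      Real.sqrt (1 - ‖(starRingEnd ℂ) l * A + (starRingEnd ℂ) m * B‖ ^ 2 /
        ((‖l‖ ^ 2 + ‖m‖ ^ 2) * 2)) := by
    intro l m
    rw [fsDist, WithLp.prod_inner_apply, WithLp.prod_norm_sq_eq_of_L2,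
      WithLp.prod_norm_sq_eq_of_L2]
    simp only [WithLp.equiv_symm_apply, WithLp.toLp_fst, WithLp.toLp_snd, inner_smul_left,
      norm_smul, hx, hy, hθ, mul_one, mul_pow, one_pow, ← hA, ← hB]
    ring_nf
  have CS : ∀ l m : ℂ,
      ‖(starRingEnd ℂ) l * A + (starRingEnd ℂ) m * B‖ ^ 2 ≤
        (‖l‖ ^ 2 + ‖m‖ ^ 2) * (a ^ 2 + b ^ 2) := by
    intro l m
    have h1 : ‖(starRingEnd ℂ) l * A + (starRingEnd ℂ) m * B‖ ≤ ‖l‖ * a + ‖m‖ * b := by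
      calc ‖(starRingEnd ℂ) l * A + (starRingEnd ℂ) m * B‖
          ≤ ‖(starRingEnd ℂ) l * A‖ + ‖(starRingEnd ℂ) m * B‖ := norm_add_le _ _
        _ = ‖l‖ * a + ‖m‖ * b := by simp [ha, hb]
    nlinarith [sq_nonneg (‖l‖ * b - ‖m‖ * a), norm_nonneg ((starRingEnd ℂ) l * A + (starRingEnd ℂ) m * B),
      norm_nonneg l, norm_nonneg m, norm_nonneg A, norm_nonneg B]
  have ha1 : a ≤ 1 := by
    simpa [hx, hθ] using norm_inner_le_norm (𝕜 := ℂ) x θ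
  have hb1 : b ≤ 1 := by
    simpa [hy, hθ] using norm_inner_le_norm (𝕜 := ℂ) y θ
  have hbdd : BddBelow (Set.range fun p : {p : ℂ × ℂ // p ≠ 0} =>
      fsDist ((WithLp.equiv 2 (E × E)).symm ((p : ℂ × ℂ).1 • x, (p : ℂ × ℂ).2 • y))
        ((WithLp.equiv 2 (E × E)).symm (θ, θ))) := by
    refine ⟨0, ?_⟩
    rintro r ⟨p, rfl⟩
    exact Real.sqrt_nonneg _
  haveI : Nonempty {p : ℂ × ℂ // p ≠ 0} := ⟨⟨(1, 0), by simp⟩⟩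
  have hmin : min (Real.sqrt (1 - a ^ 2)) (Real.sqrt (1 - b ^ 2)) =
      Real.sqrt (min (1 - a ^ 2) (1 - b ^ 2)) := by
    rcases le_total (1 - a ^ 2) (1 - b ^ 2) with h | h
    · rw [min_eq_left h, min_eq_left (Real.sqrt_le_sqrt h)]
    · rw [min_eq_right h, min_eq_right (Real.sqrt_le_sqrt h)]
  constructor
  · apply le_ciInf
    rintro ⟨⟨l, m⟩, hp⟩
    have hN : 0 < ‖l‖ ^ 2 + ‖m‖ ^ 2 := by
      rcases (not_and_or.mp (fun h => hp (Prod.ext h.1 h.2))).imp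
        (fun h => h) (fun h => h) with h | h
      · have := norm_pos_iff.mpr h
        positivity
      · have := norm_pos_iff.mpr h
        positivity
    simp only
    rw [key l m, hfx, hfy, hmin]
    apply Real.sqrt_le_sqrt
    · 
      have hQ : ‖(starRingEnd ℂ) l * A + (starRingEnd ℂ) m * B‖ ^ 2 /
          ((‖l‖ ^ 2 + ‖m‖ ^ 2) * 2) ≤ (a ^ 2 + b ^ 2) / 2 := by
        rw [div_le_div_iff₀ (by positivity) (by norm_num)]
        nlinarith [CS l m]
      rcases le_total (a ^ 2) (b ^ 2) with h | h
      · rw [min_def]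
        split <;> linarith
      · rw [min_def]
        split <;> linarith
  · by_cases hAB : A = 0 ∧ B = 0
    · have hle := ciInf_le hbdd (⟨(1, 0), by simp⟩ : {p : ℂ × ℂ // p ≠ 0})
      rw [joinDist]
      refine hle.trans ?_
      simp only
      rw [key 1 0, hAB.1, hAB.2]
      have : a = 0 := by simp [ha, hAB.1]
      rw [hfx, this]
      simp [le_max_iff]
    · have hpos : 0 < a ^ 2 + b ^ 2 := by
        rcases not_and_or.mp hAB with h | h
        · have := norm_pos_iff.mpr h
          positivity
        · have := norm_pos_iff.mpr h
          positivity
      have hle := ciInf_le hbdd (⟨(A, B), by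
        rintro h
        exact hAB ⟨congrArg Prod.fst h, congrArg Prod.snd h⟩⟩ : {p : ℂ × ℂ // p ≠ 0})
      rw [joinDist]
      refine hle.trans ?_
      simp only
      rw [key A B]
      have hnum : ‖(starRingEnd ℂ) A * A + (starRingEnd ℂ) B * B‖ = a ^ 2 + b ^ 2 := by
        rw [RCLike.conj_mul, RCLike.conj_mul]
        rw [← RCLike.ofReal_pow, ← RCLike.ofReal_pow, ← RCLike.ofReal_add,
          RCLike.norm_ofReal, abs_of_pos hpos]
      rw [hnum]
      have hQ : (a ^ 2 + b ^ 2) ^ 2 / ((a ^ 2 + b ^ 2) * 2) = (a ^ 2 + b ^ 2) / 2 := by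
        field_simp
      rw [hQ]
      rw [hfx, hfy]
      rcases le_total (a ^ 2) (b ^ 2) with h | h
      · refine le_max_of_le_left ?_
        apply Real.sqrt_le_sqrt
        linarith
      · refine le_max_of_le_right ?_
        apply Real.sqrt_le_sqrt
        linarith
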